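/- (Correctness of the Lee-weight FCLC construction, odd q) Let q ≥ 5 be odd and t ≤ (q−3)/2. For u ∈ Z_q^k let f(u) = w_L(u) and define the parity symbol p_{f(u)} = 2·f(u) mod q. Then for all u, u' ∈ Z_q^k with f(u) ≠ f(u'), d_L(u, u') + t·d_L(p_{f(u)}, p_{f(u')}) ≥ 2t+1, where d_L on symbols is the Lee distance in Z_q. -/

import Mathlib

/-- Lee distance between two symbols of `ZMod q` (representatives in `{0,…,q-1}`). -/
def leeDistSym (q : ℕ) (x y : ZMod q) : ℕ := min (x - y).val (y - x).val

/-- Lee distance between two vectors over `ZMod q`. -/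
def leeDist {q n : ℕ} (x y : Fin n → ZMod q) : ℕ := ∑ i, leeDistSym q (x i) (y i)

/-- Lee weight of a symbol of `ZMod q`. -/
def leeWtSym (q : ℕ) (x : ZMod q) : ℕ := min x.val (q - x.val)

/-- Lee weight of a vector over `ZMod q`. -/
def leeWt {q n : ℕ} (x : Fin n → ZMod q) : ℕ := ∑ i, leeWtSym q (x i)

lemma mod_two_cases (q m : ℕ) (hq : 0 < q) (h : m < 2 * q) :
    m % q = m ∨ m % q + q = m := by
  rcases Nat.lt_or_ge m q with h' | h'
  · left; exact Nat.mod_eq_of_lt h'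
  · right
    have : m % q = (m - q) % q := by
      conv_lhs => rw [show m = (m - q) + q by omega]
      simp [Nat.add_mod_right]
    rw [this, Nat.mod_eq_of_lt (by omega)]
    omega

lemma leeWtSym_le_add (q : ℕ) [NeZero q] (x y : ZMod q) :
    leeWtSym q x ≤ leeWtSym q y + leeDistSym q x y := by
  have hq : 0 < q := Nat.pos_of_ne_zero (NeZero.ne q)
  have hx : x.val < q := ZMod.val_lt x
  have hy : y.val < q := ZMod.val_lt y
  have hd1 : (x - y).val < q := ZMod.val_lt _
  have hd2 : (y - x).val < q := ZMod.val_lt _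
  have e1 : x.val = (y.val + (x - y).val) % q := by
    conv_lhs => rw [show x = y + (x - y) by ring]
    exact ZMod.val_add _ _
  have e2 : y.val = (x.val + (y - x).val) % q := by
    conv_lhs => rw [show y = x + (y - x) by ring]
    exact ZMod.val_add _ _
  have m1 := mod_two_cases q (y.val + (x - y).val) hq (by omega)
  have m2 := mod_two_cases q (x.val + (y - x).val) hq (by omega)
  rw [← e1] at m1
  rw [← e2] at m2
  unfold leeWtSym leeDistSym
  omega

lemma leeWt_le_add {q n : ℕ} [NeZero q] (x y : Fin n → ZMod q) :
    leeWt x ≤ leeWt y + leeDist x y := by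
  unfold leeWt leeDist
  rw [← Finset.sum_add_distrib]
  exact Finset.sum_le_sum fun i _ => leeWtSym_le_add q (x i) (y i)

lemma leeDistSym_comm (q : ℕ) (x y : ZMod q) :
    leeDistSym q x y = leeDistSym q y x := by
  unfold leeDistSym; exact Nat.min_comm _ _

lemma leeDist_comm {q n : ℕ} (x y : Fin n → ZMod q) :
    leeDist x y = leeDist y x := by
  unfold leeDist
  exact Finset.sum_congr rfl fun i _ => leeDistSym_comm q (x i) (y i)

lemma key_lemma (q t a b d : ℕ) (hq5 : 5 ≤ q) (hodd : Odd q)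
    (ht : t ≤ (q - 3) / 2) (hba : b < a) (hd1 : a ≤ b + d) :
    2 * t + 1 ≤ d + t * leeDistSym q ((2 * a : ℕ) : ZMod q) ((2 * b : ℕ) : ZMod q) := by
  haveI : NeZero q := ⟨by omega⟩
  have hq2 : q % 2 = 1 := Nat.odd_iff.mp hodd
  set c : ℕ := a - b with hc
  have hc1 : 1 ≤ c := by omega
  have hdc : c ≤ d := by omega
  -- rewrite the difference as a cast of 2*c
  have hdiff : ((2 * a : ℕ) : ZMod q) - ((2 * b : ℕ) : ZMod q) = ((2 * c : ℕ) : ZMod q) := by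
    have h2 : (2 * b) + (2 * c) = 2 * a := by omega
    rw [← h2]
    push_cast
    ring
  have hdiff' : ((2 * b : ℕ) : ZMod q) - ((2 * a : ℕ) : ZMod q) = -((2 * c : ℕ) : ZMod q) := by
    rw [← hdiff]; ring
  set r : ℕ := (2 * c) % q with hr
  have hrq : r < q := Nat.mod_lt _ (by omega)
  have hv1 : ((2 * c : ℕ) : ZMod q).val = r := ZMod.val_natCast q _
  have hv2 : (-((2 * c : ℕ) : ZMod q)).val = if r = 0 then 0 else q - r := by
    have hx0 : (((2 * c : ℕ) : ZMod q) = 0) ↔ r = 0 := by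
      rw [← ZMod.val_eq_zero, hv1]
    rw [ZMod.neg_val, hv1]
    simp only [hx0]
  have hD : leeDistSym q ((2 * a : ℕ) : ZMod q) ((2 * b : ℕ) : ZMod q)
      = min r (if r = 0 then 0 else q - r) := by
    unfold leeDistSym
    rw [hdiff, hdiff', hv1, hv2]
  rw [hD]
  -- relate r to c % q
  set s : ℕ := c % q with hs
  have hsq : s < q := Nat.mod_lt _ (by omega)
  have hsr : (2 * s) % q = r := by
    rw [hr, Nat.mul_mod 2 c, ← hs, Nat.mul_mod 2 s, Nat.mod_eq_of_lt hsq]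
  have hs2 := mod_two_cases q (2 * s) (by omega) (by omega)
  rw [hsr] at hs2
  have hsc : s ≤ c := Nat.mod_le _ _
  by_cases hr0 : r = 0
  · -- 2c ≡ 0 mod q, q odd ⇒ q ∣ c ⇒ c ≥ q
    have hs0 : s = 0 := by omega
    have hqc : q ∣ c := Nat.dvd_of_mod_eq_zero (by rw [← hs]; exact hs0)
    have hcq : q ≤ c := Nat.le_of_dvd (by omega) hqc
    have hmin : min r (if r = 0 then 0 else q - r) = 0 := by simp [hr0]
    rw [hmin]
    omega
  · rw [if_neg hr0]
    rcases Nat.lt_or_ge (min r (q - r)) 2 with h | h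
    · -- min = 1, so r = 1 or r = q - 1
      have hmin1 : min r (q - r) = 1 := by omega
      have hrcase : r = 1 ∨ r = q - 1 := by omega
      -- in either case s = (q+1)/2 or (q-1)/2, so c ≥ (q-1)/2
      have hcbig : (q - 1) / 2 ≤ c := by
        rcases hrcase with h1 | h1 <;> omega
      rw [hmin1]
      omega
    · -- min ≥ 2
      have h2t : t * 2 ≤ t * min r (q - r) := Nat.mul_le_mul_left t h
      have : 2 * t + 1 ≤ d + t * 2 := by omega
      exact le_trans this (Nat.add_le_add_left h2t d)

theorem lee_weight_construction_correct_odd (q k t : ℕ) (hq5 : 5 ≤ q)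
    (hodd : Odd q) (ht : t ≤ (q - 3) / 2) (u u' : Fin k → ZMod q)
    (hne : leeWt u ≠ leeWt u') :
    2 * t + 1 ≤ leeDist u u' +
      t * leeDistSym q ((2 * leeWt u : ℕ) : ZMod q)
        ((2 * leeWt u' : ℕ) : ZMod q) := by
  haveI : NeZero q := ⟨by omega⟩
  rcases Nat.lt_or_ge (leeWt u') (leeWt u) with h | h
  · exact key_lemma q t (leeWt u) (leeWt u') (leeDist u u') hq5 hodd ht h
      (leeWt_le_add u u')
  · have h' : leeWt u < leeWt u' := by omega
    rw [leeDist_comm u u', leeDistSym_comm]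
    exact key_lemma q t (leeWt u') (leeWt u) (leeDist u' u) hq5 hodd ht h'
      (leeWt_le_add u' u)
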